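/- Let D ≥ 1, and for each pair of bits b, g ∈ F₂ let ρ_b^g be a density matrix on ℂ^D and P̃_b^g a D×D complex matrix, satisfying for all a, b ∈ F₂: P̃_b^0 + P̃_b^1 = 1, P̃_b^a ρ_{b̄}^0 P̃_b^a = P̃_b^a ρ_{b̄}^1 P̃_b^a, and P̃_b^a ρ_{b̄}^0 P̃_b^{ā} = − P̃_b^a ρ_{b̄}^1 P̃_b^{ā} (where x̄ = 1 ⊕ x). Let 0 ≤ m, r with r + m ≤ n, let K be an m×n and F an r×n binary matrix whose stacked rows G = (K; F) are linearly independent over F₂, and let d_w be the minimal Hamming weight of a vector vG with v ∈ F₂^{m+r} having a nonzero entry among its first m coordinates. Fix b ∈ F₂ⁿ and, for κ ∈ F₂^m, s ∈ F₂^r, set C_{κ,s} = {g : Fg = s, Kg = κ} and ρ_{κ,s} = |C_{κ,s}|⁻¹ Σ_{g ∈ C_{κ,s}} ⊗_{k=1}^n ρ_{b̄[k]}^{g[k]}. Then for all κ, κ′ ∈ F₂^m, all s ∈ F₂^r, and all k, l ∈ F₂ⁿ with d(k, l) < d_w: (⊗_{i=1}^n P̃_{b[i]}^{k[i]}) ·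 (ρ_{κ,s} − ρ_{κ′,s}) · (⊗_{i=1}^n P̃_{b[i]}^{l[i]}) = 0. -/

import Mathlib

open Matrix
open scoped ComplexOrder Classical

/-- The `n`-fold Kronecker/tensor product `⊗_{i=1}^n M_i`, as a matrix acting on
`(ℂ^D)^{⊗n}` (indexed by functions `Fin n → Fin D`). -/
noncomputable def tpow {D n : ℕ} (M : Fin n → Matrix (Fin D) (Fin D) ℂ) :
    Matrix (Fin n → Fin D) (Fin n → Fin D) ℂ :=
  Matrix.of fun x y => ∏ i, M i (x i) (y i)

/-- `C_{κ,s} = {g ∈ F₂ⁿ : Fg = s, Kg = κ}`. -/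
noncomputable def Cset {m r n : ℕ} (K : Matrix (Fin m) (Fin n) (ZMod 2))
    (F : Matrix (Fin r) (Fin n) (ZMod 2)) (κ : Fin m → ZMod 2) (s : Fin r → ZMod 2) :
    Finset (Fin n → ZMod 2) :=
  Finset.univ.filter fun g => F *ᵥ g = s ∧ K *ᵥ g = κ

/-- `ρ_{κ,s} = |C_{κ,s}|⁻¹ Σ_{g ∈ C_{κ,s}} ⊗_{k=1}^n ρ_{b̄[k]}^{g[k]}`. -/
noncomputable def rhoKS {D m r n : ℕ} (ρ : ZMod 2 → ZMod 2 → Matrix (Fin D) (Fin D) ℂ)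
    (b : Fin n → ZMod 2) (K : Matrix (Fin m) (Fin n) (ZMod 2))
    (F : Matrix (Fin r) (Fin n) (ZMod 2)) (κ : Fin m → ZMod 2) (s : Fin r → ZMod 2) :
    Matrix (Fin n → Fin D) (Fin n → Fin D) ℂ :=
  (((Cset K F κ s).card : ℂ))⁻¹ • ∑ g ∈ Cset K F κ s, tpow (fun k => ρ (b k + 1) (g k))

noncomputable def sgn (a : ZMod 2) : ℂ := if a = 0 then 1 else -1

lemma zmod2_cases (a : ZMod 2) : a = 0 ∨ a = 1 := by revert a; decide

lemma zmod2_add_self (a : ZMod 2) : a + a = 0 := by revert a; decide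

lemma sgn_zero : sgn 0 = 1 := if_pos rfl

lemma sgn_one : sgn 1 = -1 := by norm_num [sgn]

lemma sgn_add (a c : ZMod 2) : sgn (a + c) = sgn a * sgn c := by
  have h11 : (1 + 1 : ZMod 2) = 0 := by decide
  rcases zmod2_cases a with rfl | rfl <;> rcases zmod2_cases c with rfl | rfl <;>
    simp [sgn_zero, sgn_one, h11]

lemma sgn_sum {ι : Type*} (t : Finset ι) (f : ι → ZMod 2) :
    sgn (∑ i ∈ t, f i) = ∏ i ∈ t, sgn (f i) := by
  classical
  induction t using Finset.induction_on with
  | empty => simp [sgn_zero]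
  | insert _ _ h ih => rw [Finset.sum_insert h, Finset.prod_insert h, sgn_add, ih]

lemma tpow_mul {D n : ℕ} (A B : Fin n → Matrix (Fin D) (Fin D) ℂ) :
    tpow A * tpow B = tpow (fun i => A i * B i) := by
  ext x y
  simp only [tpow, Matrix.mul_apply, Matrix.of_apply]
  have h1 : ∀ z : Fin n → Fin D, (∏ i, A i (x i) (z i)) * ∏ i, B i (z i) (y i)
      = ∏ i, (A i (x i) (z i) * B i (z i) (y i)) := fun z => Finset.prod_mul_distrib.symm
  simp_rw [h1]
  rw [Finset.prod_univ_sum]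
  simp [Fintype.piFinset_univ]

lemma tpow_smul {D n : ℕ} (c : Fin n → ℂ) (M : Fin n → Matrix (Fin D) (Fin D) ℂ) :
    tpow (fun i => c i • M i) = (∏ i, c i) • tpow M := by
  ext x y
  simp [tpow, Finset.prod_mul_distrib]

lemma dual_eq_dot {ι : Type*} [Fintype ι] [DecidableEq ι]
    (f : (ι → ZMod 2) →ₗ[ZMod 2] ZMod 2) (x : ι → ZMod 2) :
    f x = (fun i => f (Pi.single i 1)) ⬝ᵥ x := by
  rw [LinearMap.pi_apply_eq_sum_univ f x, dotProduct]
  refine Finset.sum_congr rfl fun i _ => ?_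
  rw [smul_eq_mul, mul_comm]
  congr 1
  congr 1
  ext j
  simp [Pi.single_apply, eq_comm]

lemma dot_ext {ι : Type*} [Fintype ι] [DecidableEq ι] {u w : ι → ZMod 2}
    (h : ∀ g, u ⬝ᵥ g = w ⬝ᵥ g) : u = w := by
  funext j
  have := h (Pi.single j 1)
  simpa [dotProduct_single] using this

lemma mulVec_surj {n : ℕ} {ι : Type*} [Fintype ι] [DecidableEq ι]
    (G : Matrix ι (Fin n) (ZMod 2))
    (hG : LinearIndependent (ZMod 2) (fun i => G i)) :
    Function.Surjective (G.mulVec) := by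
  have hrange : LinearMap.range G.mulVecLin = ⊤ := by
    by_contra hne
    have hlt : LinearMap.range G.mulVecLin < ⊤ := lt_top_iff_ne_top.mpr hne
    obtain ⟨f, hf0, hf⟩ := Submodule.exists_dual_map_eq_bot_of_lt_top hlt inferInstance
    set v : ι → ZMod 2 := fun i => f (Pi.single i 1) with hv
    have hfv : ∀ x, f x = v ⬝ᵥ x := dual_eq_dot f
    have hzero : ∀ g, (v ᵥ* G) ⬝ᵥ g = 0 := by
      intro g
      have hx : G *ᵥ g ∈ LinearMap.range G.mulVecLin := ⟨g, Matrix.mulVecLin_apply G g⟩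
      have h0 : f (G *ᵥ g) = 0 := by
        have := Submodule.mem_map_of_mem (f := f) hx
        rw [hf, Submodule.mem_bot] at this
        exact this
      rw [hfv, Matrix.dotProduct_mulVec] at h0
      exact h0
    have hvG : v ᵥ* G = 0 := by
      apply dot_ext (w := 0)
      intro g
      rw [hzero g, zero_dotProduct]
    have hv0 : v = 0 := by
      have hinj := Matrix.vecMul_injective_iff.mpr hG
      apply hinj
      show v ᵥ* G = 0 ᵥ* G
      rw [hvG, Matrix.zero_vecMul]
    apply hf0
    refine LinearMap.ext fun x => ?_
    rw [hfv, hv0, zero_dotProduct, LinearMap.zero_apply]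
  intro y
  have : y ∈ LinearMap.range G.mulVecLin := hrange ▸ Submodule.mem_top
  obtain ⟨g, hg⟩ := this
  exact ⟨g, by rw [← Matrix.mulVecLin_apply]; exact hg⟩

lemma mem_rowspace {n : ℕ} {ι : Type*} [Fintype ι] [DecidableEq ι]
    (G : Matrix ι (Fin n) (ZMod 2)) (e : Fin n → ZMod 2)
    (hG : LinearIndependent (ZMod 2) (fun i => G i))
    (h : ∀ g, G *ᵥ g = 0 → e ⬝ᵥ g = 0) :
    ∃ v, e = v ᵥ* G := by
  let φ : (Fin n → ZMod 2) →ₗ[ZMod 2] ZMod 2 :=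
    { toFun := fun g => e ⬝ᵥ g
      map_add' := fun x y => dotProduct_add e x y
      map_smul' := fun c x => by
        simp [dotProduct, Finset.mul_sum, mul_comm, mul_left_comm] }
  have hsurj : Function.Surjective G.mulVecLin := by
    intro y; obtain ⟨g, hg⟩ := mulVec_surj G hG y
    exact ⟨g, by rw [Matrix.mulVecLin_apply]; exact hg⟩
  obtain ⟨σ, hσ⟩ := G.mulVecLin.exists_rightInverse_of_surjective
    (LinearMap.range_eq_top.mpr hsurj)
  set ψ : (ι → ZMod 2) →ₗ[ZMod 2] ZMod 2 := φ ∘ₗ σ with hψ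
  set v : ι → ZMod 2 := fun i => ψ (Pi.single i 1) with hv
  refine ⟨v, dot_ext fun g => ?_⟩
  have hker : G *ᵥ (σ (G.mulVecLin g) - g) = 0 := by
    have h1 : G.mulVecLin (σ (G.mulVecLin g)) = G.mulVecLin g := by
      have := congrArg (fun f => f (G.mulVecLin g)) hσ
      simpa using this
    rw [← Matrix.mulVecLin_apply, map_sub, h1, sub_self]
  have hphi : φ g = φ (σ (G.mulVecLin g)) := by
    have h2 : φ (σ (G.mulVecLin g) - g) = 0 := h _ hker
    rw [map_sub] at h2
    linear_combination (norm := abel) -h2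
  calc e ⬝ᵥ g = φ g := rfl
    _ = ψ (G.mulVecLin g) := hphi
    _ = v ⬝ᵥ (G *ᵥ g) := by rw [dual_eq_dot ψ, Matrix.mulVecLin_apply]
    _ = (v ᵥ* G) ⬝ᵥ g := Matrix.dotProduct_mulVec v G g

/-- under the quasiperfect-source identities, for all keys `κ, κ′`,
syndromes `s`, and strings `k, l` with `d(k,l) < d_w`:
`(⊗ᵢ P̃_{b[i]}^{k[i]}) (ρ_{κ,s} − ρ_{κ′,s}) (⊗ᵢ P̃_{b[i]}^{l[i]}) = 0`. -/
theorem stmt9 (D n m r : ℕ) (hD : 1 ≤ D) (hmrn : r + m ≤ n)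
    (ρ Pt : ZMod 2 → ZMod 2 → Matrix (Fin D) (Fin D) ℂ)
    (hρ : ∀ b g, (ρ b g).PosSemidef ∧ (ρ b g).trace = 1)
    (hPt1 : ∀ b : ZMod 2, Pt b 0 + Pt b 1 = 1)
    (hPt2 : ∀ a b : ZMod 2,
      Pt b a * ρ (b + 1) 0 * Pt b a = Pt b a * ρ (b + 1) 1 * Pt b a)
    (hPt3 : ∀ a b : ZMod 2,
      Pt b a * ρ (b + 1) 0 * Pt b (a + 1) = -(Pt b a * ρ (b + 1) 1 * Pt b (a + 1)))
    (K : Matrix (Fin m) (Fin n) (ZMod 2)) (F : Matrix (Fin r) (Fin n) (ZMod 2))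
    (hG : LinearIndependent (ZMod 2) (fun i => Matrix.fromRows K F i))
    (dw : ℕ)
    (hdw : IsLeast {w : ℕ | ∃ v : Fin m ⊕ Fin r → ZMod 2,
        (∃ i : Fin m, v (Sum.inl i) ≠ 0) ∧ hammingNorm (v ᵥ* Matrix.fromRows K F) = w} dw)
    (b : Fin n → ZMod 2)
    (κ κ' : Fin m → ZMod 2) (s : Fin r → ZMod 2)
    (k l : Fin n → ZMod 2) (hkl : hammingDist k l < dw) :
    tpow (fun i => Pt (b i) (k i)) *
        (rhoKS ρ b K F κ s - rhoKS ρ b K F κ' s) *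
        tpow (fun i => Pt (b i) (l i)) = 0 := by
  classical
  set G : Matrix (Fin m ⊕ Fin r) (Fin n) (ZMod 2) := Matrix.fromRows K F with hGdef
  set e : Fin n → ZMod 2 := fun i => k i + l i with he
  set M : Fin n → Matrix (Fin D) (Fin D) ℂ :=
    fun i => Pt (b i) (k i) * ρ (b i + 1) 0 * Pt (b i) (l i) with hM
  have hadd0 : ∀ x y : ZMod 2, x + y = 0 → y = x := by decide
  have hadd1 : ∀ x y : ZMod 2, x + y = 1 → y = x + 1 := by decide
  have hsub : ∀ x y : ZMod 2, x - y = x + y := by decide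
  -- per-site identity
  have hsite : ∀ (a a' g bb : ZMod 2),
      Pt bb a * ρ (bb + 1) g * Pt bb a'
        = sgn (g * (a + a')) • (Pt bb a * ρ (bb + 1) 0 * Pt bb a') := by
    intro a a' g bb
    rcases zmod2_cases g with rfl | rfl
    · rw [zero_mul, sgn_zero, one_smul]
    · rw [one_mul]
      rcases zmod2_cases (a + a') with h0 | h1
      · rw [h0, sgn_zero, one_smul, hadd0 a a' h0, ← hPt2 a bb]
      · rw [h1, sgn_one, hadd1 a a' h1, neg_smul, one_smul, hPt3 a bb, neg_neg]
  -- key tensor identity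
  have key : ∀ g : Fin n → ZMod 2,
      tpow (fun i => Pt (b i) (k i)) * tpow (fun i => ρ (b i + 1) (g i)) *
        tpow (fun i => Pt (b i) (l i)) = sgn (e ⬝ᵥ g) • tpow M := by
    intro g
    rw [tpow_mul, tpow_mul]
    have h1 : (fun i => Pt (b i) (k i) * ρ (b i + 1) (g i) * Pt (b i) (l i))
        = fun i => sgn (g i * (k i + l i)) • M i := by
      funext i; exact hsite (k i) (l i) (g i) (b i)
    rw [h1, tpow_smul]
    congr 1
    rw [← sgn_sum]
    congr 1
    simp [dotProduct, mul_comm, he]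
  -- single coset term
  have hterm : ∀ κ₀ : Fin m → ZMod 2,
      tpow (fun i => Pt (b i) (k i)) * rhoKS ρ b K F κ₀ s *
        tpow (fun i => Pt (b i) (l i))
        = (((Cset K F κ₀ s).card : ℂ))⁻¹ •
            (∑ g ∈ Cset K F κ₀ s, sgn (e ⬝ᵥ g)) • tpow M := by
    intro κ₀
    rw [rhoKS, Matrix.mul_smul, Matrix.smul_mul, Finset.mul_sum, Finset.sum_mul]
    congr 1
    rw [Finset.sum_congr rfl (fun g _ => key g), ← Finset.sum_smul]
  -- nonemptiness of cosets
  have hsur := mulVec_surj G hG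
  have hne : ∀ κ₀ : Fin m → ZMod 2, (Cset K F κ₀ s).Nonempty := by
    intro κ₀
    obtain ⟨g, hg⟩ := hsur (Sum.elim κ₀ s)
    rw [hGdef, Matrix.fromRows_mulVec] at hg
    refine ⟨g, ?_⟩
    simp only [Cset, Finset.mem_filter, Finset.mem_univ, true_and]
    exact ⟨funext fun j => congr_fun hg (Sum.inr j), funext fun i => congr_fun hg (Sum.inl i)⟩
  have hcne : ∀ κ₀ : Fin m → ZMod 2, (((Cset K F κ₀ s).card : ℂ)) ≠ 0 := by
    intro κ₀
    exact_mod_cast Nat.cast_ne_zero.mpr (Finset.card_ne_zero_of_mem (hne κ₀).choose_spec)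
  -- membership facts
  have hmem : ∀ (κ₀ : Fin m → ZMod 2) g, g ∈ Cset K F κ₀ s ↔ (F *ᵥ g = s ∧ K *ᵥ g = κ₀) := by
    intro κ₀ g
    simp [Cset]
  rw [Matrix.mul_sub, Matrix.sub_mul, hterm κ, hterm κ']
  by_cases hA : ∃ h, G *ᵥ h = 0 ∧ e ⬝ᵥ h = 1
  · -- character sum vanishes on every coset
    obtain ⟨h, hh0, hh1⟩ := hA
    rw [hGdef, Matrix.fromRows_mulVec] at hh0
    have hFh : F *ᵥ h = 0 := funext fun j => congr_fun hh0 (Sum.inr j)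
    have hKh : K *ᵥ h = 0 := funext fun i => congr_fun hh0 (Sum.inl i)
    have hS0 : ∀ κ₀ : Fin m → ZMod 2, (∑ g ∈ Cset K F κ₀ s, sgn (e ⬝ᵥ g)) = 0 := by
      intro κ₀
      have hclosed : ∀ g ∈ Cset K F κ₀ s, g + h ∈ Cset K F κ₀ s := by
        intro g hg
        rw [hmem] at hg ⊢
        rw [Matrix.mulVec_add, Matrix.mulVec_add, hg.1, hg.2, hFh, hKh, add_zero, add_zero]
        exact ⟨rfl, rfl⟩
      have hinv : ∀ g : Fin n → ZMod 2, g + h + h = g := by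
        intro g; funext i
        rw [add_assoc]
        show g i + (h i + h i) = g i
        rw [zmod2_add_self, add_zero]
      have hre : (∑ g ∈ Cset K F κ₀ s, sgn (e ⬝ᵥ g))
          = ∑ g ∈ Cset K F κ₀ s, sgn (e ⬝ᵥ (g + h)) := by
        refine Finset.sum_nbij' (fun g => g + h) (fun g => g + h) ?_ ?_ ?_ ?_ ?_
        · intro g hg; exact hclosed g hg
        · intro g hg; exact hclosed g hg
        · intro g _; exact hinv g
        · intro g _; exact hinv g
        · intro g _
          rw [hinv g]
      have : (∑ g ∈ Cset K F κ₀ s, sgn (e ⬝ᵥ g))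
          = -(∑ g ∈ Cset K F κ₀ s, sgn (e ⬝ᵥ g)) := by
        nth_rewrite 1 [hre]
        rw [← Finset.sum_neg_distrib]
        refine Finset.sum_congr rfl fun g _ => ?_
        rw [dotProduct_add, sgn_add, hh1, sgn_one, mul_neg, mul_one]
      exact CharZero.eq_neg_self_iff.mp this
    simp [hS0 κ, hS0 κ']
  · -- e lies in the row space
    push_neg at hA
    have hker : ∀ h, G *ᵥ h = 0 → e ⬝ᵥ h = 0 := by
      intro h hh
      rcases zmod2_cases (e ⬝ᵥ h) with h0 | h1
      · exact h0
      · exact absurd h1 (hA h hh)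
    obtain ⟨v, hev⟩ := mem_rowspace G e hG hker
    have hvl : ∀ i : Fin m, v (Sum.inl i) = 0 := by
      by_contra hc
      push_neg at hc
      obtain ⟨i, hi⟩ := hc
      have hle : dw ≤ hammingNorm (v ᵥ* G) := hdw.2 ⟨v, ⟨i, hi⟩, rfl⟩
      have hee : hammingNorm (v ᵥ* G) = hammingDist k l := by
        rw [← hev, hammingDist_eq_hammingNorm]
        congr 1
        funext i
        show k i + l i = -k i + l i
        rw [ZMod.neg_eq_self_mod_two]
      omega
    set t : ZMod 2 := ∑ j : Fin r, v (Sum.inr j) * s j with ht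
    have hconst : ∀ (κ₀ : Fin m → ZMod 2), ∀ g ∈ Cset K F κ₀ s, e ⬝ᵥ g = t := by
      intro κ₀ g hg
      rw [hmem] at hg
      have hGg : G *ᵥ g = Sum.elim κ₀ s := by
        rw [hGdef, Matrix.fromRows_mulVec, hg.1, hg.2]
      rw [hev, ← Matrix.dotProduct_mulVec, hGg]
      rw [dotProduct, Fintype.sum_sum_type]
      simp only [Sum.elim_inl, Sum.elim_inr]
      rw [Finset.sum_congr rfl fun i _ => by rw [hvl i, zero_mul]]
      rw [Finset.sum_const, smul_zero, zero_add]
    have hSc : ∀ κ₀ : Fin m → ZMod 2,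
        (∑ g ∈ Cset K F κ₀ s, sgn (e ⬝ᵥ g)) = ((Cset K F κ₀ s).card : ℂ) * sgn t := by
      intro κ₀
      rw [Finset.sum_congr rfl fun g hg => by rw [hconst κ₀ g hg]]
      rw [Finset.sum_const, nsmul_eq_mul]
    rw [hSc κ, hSc κ', smul_smul, smul_smul, inv_mul_cancel_left₀ (hcne κ),
      inv_mul_cancel_left₀ (hcne κ'), sub_self]
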